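/- Define K_n*(x,y) = K_n(x,y) - T_n(x₁)T_n(y₁), where K_n is the reproducing kernel of Π_n² in L²(W). Then K_n*(x,y) = 0 whenever x and y are distinct Padua points in Pad_n. -/

import Mathlib

open Real Finset
open Real MeasureTheory Finset

/-- Evaluated Chebyshev polynomial of the first kind. -/
noncomputable def chT (m : ℤ) (x : ℝ) : ℝ := (Polynomial.Chebyshev.T ℝ m).eval x

/-- First coordinates of Padua points. -/
noncomputable def padXi (n k : ℕ) : ℝ := Real.cos (k * π / n)

/-- Second coordinates of Padua points. -/
noncomputable def padEta (n k j : ℕ) : ℝ :=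
  if Even k then Real.cos ((2 * (j : ℝ) - 1) * π / (n + 1))
  else Real.cos ((2 * (j : ℝ) - 2) * π / (n + 1))

/-- The set of Padua points of degree `n`. -/
noncomputable def Pad (n : ℕ) : Set (ℝ × ℝ) :=
  {p | ∃ k j : ℕ, k ≤ n ∧ 1 ≤ j ∧ j ≤ n / 2 + 1 ∧ p = (padXi n k, padEta n k j)}

/-- Normalized Chebyshev polynomials. -/
noncomputable def chTtil (m : ℕ) (x : ℝ) : ℝ :=
  if m = 0 then 1 else Real.sqrt 2 * chT m x

/-- Orthonormal basis `P_k^m` of bivariate Chebyshev polynomials (functions). -/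
noncomputable def chP (m k : ℕ) (x : ℝ × ℝ) : ℝ := chTtil (m - k) x.1 * chTtil k x.2

/-- Reproducing kernel of `Π_n²` in `L²(W)`. -/
noncomputable def kerK (n : ℕ) (x y : ℝ × ℝ) : ℝ :=
  ∑ m ∈ Finset.range (n + 1), ∑ j ∈ Finset.range (m + 1), chP m j x * chP m j y

/-- Modified kernel `K_n^*`. -/
noncomputable def kerKstar (n : ℕ) (x y : ℝ × ℝ) : ℝ :=
  kerK n x y - chT n x.1 * chT n y.1

/-- The generators `Q_k^{n+1}` of the Padua ideal (as functions). -/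
noncomputable def chQ (n k : ℕ) (x : ℝ × ℝ) : ℝ :=
  if k = 0 then chT (n + 1) x.1 - chT ((n : ℤ) - 1) x.1
  else chT ((n : ℤ) - k + 1) x.1 * chT k x.2 + chT ((n : ℤ) - k + 1) x.2 * chT ((k : ℤ) - 1) x.1

/-- The product Chebyshev weight on `[-1,1]²`. -/
noncomputable def chW (x : ℝ × ℝ) : ℝ :=
  1 / (π ^ 2 * Real.sqrt (1 - x.1 ^ 2) * Real.sqrt (1 - x.2 ^ 2))

/-- Evaluation of a bivariate polynomial at a point of `ℝ²`. -/
noncomputable def ev2 (P : MvPolynomial (Fin 2) ℝ) (x : ℝ × ℝ) : ℝ :=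
  MvPolynomial.eval (fun i : Fin 2 => if i = 0 then x.1 else x.2) P


noncomputable def eps (a : ℕ) : ℝ := if a = 0 then 1 else 2

lemma sum_cos_range (m : ℕ) (hm : 1 ≤ m) (p : ℤ) :
    ∑ a ∈ Finset.range (m + 1), Real.cos (a * p * π / m) =
      if (2 * (m : ℤ)) ∣ p then ((m : ℝ) + 1) else (if Even p then 1 else 0) := by
  have hm0 : (m : ℝ) ≠ 0 := Nat.cast_ne_zero.mpr (by omega)
  have hmC : (m : ℂ) ≠ 0 := Nat.cast_ne_zero.mpr (by omega)
  by_cases hd : (2 * (m : ℤ)) ∣ p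
  · rw [if_pos hd]
    obtain ⟨t, ht⟩ := hd
    have h1 : ∀ a ∈ Finset.range (m + 1), Real.cos (a * p * π / m) = 1 := by
      intro a _
      have h2 : (a : ℝ) * p * π / m = (a * t : ℤ) * (2 * π) := by
        subst ht; push_cast; field_simp
      rw [h2, Real.cos_int_mul_two_pi]
    rw [Finset.sum_congr rfl h1, Finset.sum_const, Finset.card_range]
    push_cast; ring
  · rw [if_neg hd]
    set θ : ℝ := (p : ℝ) * π / m with hθ
    set z : ℂ := Complex.exp (θ * Complex.I) with hz
    have habs : ‖z‖ = 1 := Complex.norm_exp_ofReal_mul_I θ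
    have hzne : z ≠ 1 := by
      intro h
      rw [hz, Complex.exp_eq_one_iff] at h
      obtain ⟨t, ht⟩ := h
      have h2 : (θ : ℂ) = (t : ℂ) * (2 * (π : ℝ)) := by
        apply mul_right_cancel₀ Complex.I_ne_zero
        rw [ht]; push_cast; ring
      have h3 : θ = (t : ℝ) * (2 * π) := by exact_mod_cast h2
      have h5 : (p : ℝ) * π = 2 * m * t * π := by
        rw [hθ] at h3; field_simp at h3; linear_combination π * h3
      have h4 : (p : ℝ) = 2 * m * t :=
        mul_right_cancel₀ Real.pi_ne_zero h5
      have h6 : p = 2 * m * t := by exact_mod_cast h4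
      exact hd ⟨t, by omega⟩
    have hterm : ∀ a : ℕ, Real.cos ((a : ℝ) * p * π / m) = (z ^ a).re := by
      intro a
      rw [hz, ← Complex.exp_nat_mul]
      have h7 : (a : ℂ) * ((θ : ℝ) * Complex.I) = ((a * θ : ℝ) : ℂ) * Complex.I := by
        push_cast; ring
      rw [h7, Complex.exp_ofReal_mul_I_re]
      congr 1; rw [hθ]; ring
    have hsum : ∑ a ∈ Finset.range (m + 1), Real.cos (a * p * π / m)
        = (∑ a ∈ Finset.range (m + 1), z ^ a).re := by
      rw [Complex.re_sum]
      exact Finset.sum_congr rfl fun a _ => hterm a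
    set w : ℂ := ∑ a ∈ Finset.range (m + 1), z ^ a with hw
    have hzm : z ^ m = (-1 : ℂ) ^ p := by
      rw [hz, ← Complex.exp_nat_mul]
      have h8 : (m : ℂ) * ((θ : ℝ) * Complex.I) = (p : ℂ) * ((π : ℝ) * Complex.I) := by
        rw [hθ]; push_cast; field_simp
      rw [h8]
      rw [show ((π : ℝ) : ℂ) * Complex.I = (π : ℂ) * Complex.I from by norm_cast]
      rw [Complex.exp_int_mul, Complex.exp_pi_mul_I]
    have hgeom : w * (z - 1) = z ^ (m + 1) - 1 := geom_sum_mul z (m + 1)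
    rcases Int.even_or_odd p with hp | hp
    · rw [if_pos hp, hsum]
      have h9 : z ^ (m + 1) = z := by
        rw [pow_succ, hzm, hp.neg_one_zpow, one_mul]
      have h10 : w = 1 := by
        apply mul_right_cancel₀ (sub_ne_zero.mpr hzne)
        rw [hgeom, h9]; ring
      rw [h10, Complex.one_re]
    · rw [if_neg (Int.not_even_iff_odd.mpr hp), hsum]
      have h9 : z ^ (m + 1) = -z := by
        rw [pow_succ, hzm, hp.neg_one_zpow]; ring
      have h11 : w * (z - 1) = -z - 1 := by rw [hgeom, h9]
      have hns : Complex.normSq z = 1 := by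
        rw [Complex.normSq_eq_norm_sq, habs]; norm_num
      have hcc : z * (starRingEnd ℂ) z = 1 := by
        rw [Complex.mul_conj, hns]; norm_num
      have h12 : w * ((Complex.normSq (z - 1) : ℝ) : ℂ) = z - (starRingEnd ℂ) z := by
        rw [← Complex.mul_conj, ← mul_assoc, h11, map_sub, map_one]
        have expand : (-z - 1) * ((starRingEnd ℂ) z - 1)
            = -(z * (starRingEnd ℂ) z) + z - (starRingEnd ℂ) z + 1 := by ring
        rw [expand, hcc]; ring
      have h13 : w.re * Complex.normSq (z - 1) = 0 := by
        have h := congrArg Complex.re h12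
        simpa [Complex.mul_re, Complex.conj_re] using h
      have h14 : Complex.normSq (z - 1) ≠ 0 :=
        fun h => sub_ne_zero.mpr hzne (Complex.normSq_eq_zero.mp h)
      have h15 : w.re = 0 := by
        rcases mul_eq_zero.mp h13 with h | h
        · exact h
        · exact absurd h h14
      rw [h15]

lemma sum_eps (m : ℕ) (f : ℕ → ℝ) :
    ∑ b ∈ Finset.range (m + 1), eps b * f b
      = 2 * (∑ b ∈ Finset.range (m + 1), f b) - f 0 := by
  have h : ∀ b ∈ Finset.range (m + 1),
      eps b * f b = 2 * f b - (if b = 0 then f b else 0) := by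
    intro b _
    unfold eps
    split <;> ring
  rw [Finset.sum_congr rfl h, Finset.sum_sub_distrib, Finset.sum_ite_eq' (Finset.range (m + 1)) 0 f,
    if_pos (Finset.mem_range.mpr (by omega)), Finset.mul_sum]

lemma tri_reindex (n : ℕ) (f : ℕ → ℕ → ℝ) :
    ∑ m ∈ Finset.range (n + 1), ∑ c ∈ Finset.range (m + 1), f (m - c) c
      = ∑ a ∈ Finset.range (n + 1), ∑ b ∈ Finset.range (n + 1 - a), f a b := by
  induction n with
  | zero => simp
  | succ n ih =>
    rw [Finset.sum_range_succ, ih]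
    have hswap : ∑ c ∈ Finset.range (n + 1 + 1), f (n + 1 - c) c
        = ∑ c ∈ Finset.range (n + 1 + 1), f c (n + 1 - c) := by
      rw [← Finset.sum_range_reflect]
      apply Finset.sum_congr rfl
      intro c hc
      rw [Finset.mem_range] at hc
      congr 1 <;> omega
    rw [hswap]
    rw [Finset.sum_range_succ (fun a => ∑ b ∈ Finset.range (n + 1 + 1 - a), f a b)]
    have h1 : ∀ a ∈ Finset.range (n + 1),
        ∑ b ∈ Finset.range (n + 1 + 1 - a), f a b
          = ∑ b ∈ Finset.range (n + 1 - a), f a b + f a (n + 1 - a) := by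
      intro a ha
      rw [Finset.mem_range] at ha
      have : n + 1 + 1 - a = (n + 1 - a) + 1 := by omega
      rw [this, Finset.sum_range_succ]
    rw [Finset.sum_congr rfl h1, Finset.sum_add_distrib]
    have h2 : n + 1 + 1 - (n + 1) = 1 := by omega
    rw [h2, Finset.sum_range_one]
    rw [Finset.sum_range_succ (fun c => f c (n + 1 - c))]
    have h3 : n + 1 - (n + 1) = 0 := by omega
    rw [h3]
    ring

lemma tri_split (n : ℕ) (g : ℕ → ℕ → ℝ) :
    ∑ a ∈ Finset.range (n + 1), ∑ b ∈ Finset.range (n + 2), g a b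
      = (∑ a ∈ Finset.range (n + 1), ∑ b ∈ Finset.range (n + 1 - a), g a b)
      + ∑ a ∈ Finset.range (n + 1), ∑ b ∈ Finset.range (n + 1 - a), g (n - a) (n + 1 - b) := by
  have hrow : ∀ a ∈ Finset.range (n + 1),
      ∑ b ∈ Finset.range (n + 2), g a b
        = ∑ b ∈ Finset.range (n + 1 - a), g a b
          + ∑ i ∈ Finset.range (a + 1), g a (n + 1 - a + i) := by
    intro a ha
    rw [Finset.mem_range] at ha
    have hsplit : n + 2 = (n + 1 - a) + (a + 1) := by omega
    rw [hsplit, Finset.sum_range_add]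
  rw [Finset.sum_congr rfl hrow, Finset.sum_add_distrib]
  congr 1
  rw [← Finset.sum_range_reflect (fun a => ∑ i ∈ Finset.range (a + 1), g a (n + 1 - a + i)) (n + 1)]
  apply Finset.sum_congr rfl
  intro a ha
  rw [Finset.mem_range] at ha
  beta_reduce
  have h1 : n + 1 - 1 - a = n - a := by omega
  rw [h1]
  have h2 : n - a + 1 = n + 1 - a := by omega
  rw [h2]
  rw [← Finset.sum_range_reflect (fun b => g (n - a) (n + 1 - (n - a) + b)) (n + 1 - a)]
  apply Finset.sum_congr rfl
  intro b hb
  rw [Finset.mem_range] at hb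
  congr 1
  omega

lemma S_eval (n : ℕ) (hn : 1 ≤ n) (p q : ℤ) (hpq : Even (p + q))
    (hnd : ¬((2 * (n : ℤ)) ∣ p ∧ (2 * ((n : ℤ) + 1)) ∣ q)) :
    ∑ a ∈ Finset.range (n + 1), ∑ b ∈ Finset.range (n + 1 - a),
        eps a * eps b * Real.cos (a * p * π / n) * Real.cos (b * q * π / (n + 1))
      = if Even p then (1 : ℝ) else -1 := by
  have hn0 : (n : ℝ) ≠ 0 := Nat.cast_ne_zero.mpr (by omega)
  have hn10 : ((n : ℝ) + 1) ≠ 0 := by positivity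
  set C : ℕ → ℝ := fun a => Real.cos (a * p * π / n) with hC
  set D : ℕ → ℝ := fun b => Real.cos (b * q * π / (n + 1)) with hD
  set ep : ℝ := if Even p then 1 else -1 with hep
  set eq' : ℝ := if Even q then 1 else -1 with heq'
  have hpq' : Even p ↔ Even q := Int.even_add.mp hpq
  have hepeq : ep * eq' = 1 := by
    by_cases h : Even p
    · rw [hep, heq', if_pos h, if_pos (hpq'.mp h)]; ring
    · rw [hep, heq', if_neg h, if_neg (fun hq => h (hpq'.mpr hq))]; ring
  have hC0 : C 0 = 1 := by simp [hC]
  have hD0 : D 0 = 1 := by simp [hD]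
  have hepz : ((-1 : ℝ)) ^ p = ep := by
    rw [hep]
    rcases Int.even_or_odd p with h | h
    · rw [h.neg_one_zpow, if_pos h]
    · rw [h.neg_one_zpow, if_neg (Int.not_even_iff_odd.mpr h)]
  have heqz : ((-1 : ℝ)) ^ q = eq' := by
    rw [heq']
    rcases Int.even_or_odd q with h | h
    · rw [h.neg_one_zpow, if_pos h]
    · rw [h.neg_one_zpow, if_neg (Int.not_even_iff_odd.mpr h)]
  have hCrefl : ∀ a, a ≤ n → C (n - a) = ep * C a := by
    intro a ha
    show Real.cos (((n - a : ℕ) : ℝ) * p * π / n) = ep * Real.cos (a * p * π / n)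
    rw [Nat.cast_sub ha]
    have harg : ((n : ℝ) - a) * p * π / n = (p : ℝ) * π - a * p * π / n := by
      field_simp
    rw [harg, Real.cos_int_mul_pi_sub, hepz]
  have hDrefl : ∀ b, b ≤ n + 1 → D (n + 1 - b) = eq' * D b := by
    intro b hb
    show Real.cos (((n + 1 - b : ℕ) : ℝ) * q * π / (n + 1))
        = eq' * Real.cos (b * q * π / (n + 1))
    have hcast : ((n + 1 - b : ℕ) : ℝ) = (n : ℝ) + 1 - b := by
      rw [Nat.cast_sub hb]; push_cast; ring
    rw [hcast]
    have harg : ((n : ℝ) + 1 - b) * q * π / (n + 1) = (q : ℝ) * π - b * q * π / (n + 1) := by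
      field_simp
    rw [harg, Real.cos_int_mul_pi_sub, heqz]
  have hDtop : D (n + 1) = eq' := by
    have h := hDrefl 0 (by omega)
    simpa [hD0] using h
  set DS : ℕ → ℝ := fun a => ∑ b ∈ Finset.range (n + 1 - a), D b with hDS
  set CA : ℝ := ∑ a ∈ Finset.range (n + 1), C a with hCA
  set DB : ℝ := ∑ b ∈ Finset.range (n + 2), D b with hDB
  set US : ℝ := ∑ a ∈ Finset.range (n + 1), C a * DS a with hUS
  -- Step 1: reduce to US, CA, DS 0
  have hinner : ∀ a ∈ Finset.range (n + 1),
      ∑ b ∈ Finset.range (n + 1 - a), eps a * eps b * C a * D b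
        = eps a * (C a * (2 * DS a - 1)) := by
    intro a ha
    rw [Finset.mem_range] at ha
    have h1 : n + 1 - a = (n - a) + 1 := by omega
    have h2 : ∑ b ∈ Finset.range (n + 1 - a), eps a * eps b * C a * D b
        = (eps a * C a) * ∑ b ∈ Finset.range (n + 1 - a), eps b * D b := by
      rw [Finset.mul_sum]
      exact Finset.sum_congr rfl fun b _ => by ring
    rw [h2, hDS]
    simp only [h1]
    rw [sum_eps (n - a) D, hD0]
    ring
  have hstep1 : ∑ a ∈ Finset.range (n + 1), ∑ b ∈ Finset.range (n + 1 - a),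
      eps a * eps b * C a * D b = 4 * US - 2 * CA - 2 * DS 0 + 1 := by
    rw [Finset.sum_congr rfl hinner, sum_eps n (fun a => C a * (2 * DS a - 1))]
    have h3 : ∑ a ∈ Finset.range (n + 1), C a * (2 * DS a - 1)
        = 2 * US - CA := by
      rw [hUS, hCA, Finset.mul_sum, ← Finset.sum_sub_distrib]
      exact Finset.sum_congr rfl fun a _ => by ring
    rw [h3, hC0]
    have h4 : DS 0 = ∑ b ∈ Finset.range (n + 1), D b := by
      simp [hDS]
    rw [h4] at *
    ring
  -- Step 2: 2 * US = CA * DB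
  have hstep2 : 2 * US = CA * DB := by
    have hrect := tri_split n (fun a b => C a * D b)
    have hlhs : ∑ a ∈ Finset.range (n + 1), ∑ b ∈ Finset.range (n + 2), C a * D b
        = CA * DB := by
      rw [hCA, hDB, Finset.sum_mul]
      exact Finset.sum_congr rfl fun a _ => by rw [Finset.mul_sum]
    have hsecond : ∑ a ∈ Finset.range (n + 1), ∑ b ∈ Finset.range (n + 1 - a),
        C (n - a) * D (n + 1 - b) = US := by
      rw [hUS]
      apply Finset.sum_congr rfl
      intro a ha
      rw [Finset.mem_range] at ha
      rw [hDS, Finset.mul_sum]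
      apply Finset.sum_congr rfl
      intro b hb
      rw [Finset.mem_range] at hb
      rw [hCrefl a (by omega), hDrefl b (by omega)]
      calc ep * C a * (eq' * D b) = (ep * eq') * (C a * D b) := by ring
        _ = C a * D b := by rw [hepeq]; ring
    have hfirst : ∑ a ∈ Finset.range (n + 1), ∑ b ∈ Finset.range (n + 1 - a),
        C a * D b = US := by
      rw [hUS]
      exact Finset.sum_congr rfl fun a _ => by rw [hDS, Finset.mul_sum]
    rw [hlhs, hfirst, hsecond] at hrect
    linarith
  -- Step 3: DS 0 = DB - eq'
  have hstep3 : DS 0 = DB - eq' := by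
    rw [hDS, hDB]
    simp only [Nat.sub_zero]
    rw [Finset.sum_range_succ (f := D) (n := n + 1), hDtop]
    ring
  -- Step 4: evaluate CA, DB
  have hCAval : CA = if (2 * (n : ℤ)) ∣ p then ((n : ℝ) + 1) else (if Even p then 1 else 0) :=
    sum_cos_range n hn p
  have hDBval : DB = if (2 * ((n : ℤ) + 1)) ∣ q then ((n : ℝ) + 2) else (if Even q then 1 else 0) := by
    have h := sum_cos_range (n + 1) (by omega) q
    rw [hDB]
    have hcast : ∀ b : ℕ, Real.cos (b * q * π / ((n : ℝ) + 1))
        = Real.cos (b * q * π / ((n + 1 : ℕ) : ℝ)) := by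
      intro b; push_cast; ring_nf
    calc ∑ b ∈ Finset.range (n + 2), D b
        = ∑ b ∈ Finset.range (n + 1 + 1), Real.cos (b * q * π / ((n + 1 : ℕ) : ℝ)) := by
          exact Finset.sum_congr rfl fun b _ => hcast b
      _ = _ := by
          rw [h]
          have : ((n + 1 : ℕ) : ℤ) = (n : ℤ) + 1 := by push_cast; ring
          rw [this]
          split_ifs with h1 h2
          · push_cast; ring
          · rfl
          · rfl
  -- Final computation
  have hevp : (2 * (n : ℤ)) ∣ p → Even p := fun ⟨t, ht⟩ => ⟨n * t, by rw [ht]; ring⟩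
  have hevq : (2 * ((n : ℤ) + 1)) ∣ q → Even q := fun ⟨t, ht⟩ => ⟨(n + 1) * t, by rw [ht]; ring⟩
  have hfin : 4 * US = 2 * (CA * DB) := by linarith
  rw [hstep1, hstep3, hfin]
  by_cases hp : Even p
  · have hq : Even q := hpq'.mp hp
    have hepval : ep = 1 := by rw [hep, if_pos hp]
    have heqval : eq' = 1 := by rw [heq', if_pos hq]
    rw [hepval, heqval]
    by_cases h1 : (2 * (n : ℤ)) ∣ p
    · have h2 : ¬ (2 * ((n : ℤ) + 1)) ∣ q := fun h2 => hnd ⟨h1, h2⟩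
      have hCA' : CA = (n : ℝ) + 1 := by rw [hCAval, if_pos h1]
      have hDB' : DB = 1 := by rw [hDBval, if_neg h2, if_pos hq]
      rw [hCA', hDB']; ring
    · have hCA' : CA = 1 := by rw [hCAval, if_neg h1, if_pos hp]
      by_cases h2 : (2 * ((n : ℤ) + 1)) ∣ q
      · have hDB' : DB = (n : ℝ) + 2 := by rw [hDBval, if_pos h2]
        rw [hCA', hDB']; ring
      · have hDB' : DB = 1 := by rw [hDBval, if_neg h2, if_pos hq]
        rw [hCA', hDB']; ring
  · have hq : ¬ Even q := fun hq => hp (hpq'.mpr hq)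
    have h1 : ¬ (2 * (n : ℤ)) ∣ p := fun h => hp (hevp h)
    have h2 : ¬ (2 * ((n : ℤ) + 1)) ∣ q := fun h => hq (hevq h)
    have hepval : ep = -1 := by rw [hep, if_neg hp]
    have heqval : eq' = -1 := by rw [heq', if_neg hq]
    have hCA' : CA = 0 := by rw [hCAval, if_neg h1, if_neg hp]
    have hDB' : DB = 0 := by rw [hDBval, if_neg h2, if_neg hq]
    rw [hepval, heqval, hCA', hDB']; ring
-- appended after full.lean contents + original defs
lemma keq_of_dvd_sub {n k k' : ℕ} (hn : 1 ≤ n) (hk : k ≤ n) (hk' : k' ≤ n)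
    (h : (2 * (n : ℤ)) ∣ ((k : ℤ) - k')) : k = k' := by
  have h0 : (k : ℤ) - k' = 0 := by
    apply Int.eq_zero_of_abs_lt_dvd h
    rw [abs_lt]
    omega
  omega

lemma keq_of_dvd_add {n k k' : ℕ} (hn : 1 ≤ n) (hk : k ≤ n) (hk' : k' ≤ n)
    (h : (2 * (n : ℤ)) ∣ ((k : ℤ) + k')) : k = k' := by
  have h' : 2 * n ∣ k + k' := by exact_mod_cast h
  rcases Nat.eq_zero_or_pos (k + k') with h0 | hpos
  · omega
  · have := Nat.le_of_dvd hpos h'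
    omega

lemma pad_repr {n : ℕ} (hn : 1 ≤ n) {x : ℝ × ℝ} (hx : x ∈ Pad n) :
    ∃ k l : ℕ, k ≤ n ∧ l ≤ n + 1 ∧ (k + l) % 2 = 1 ∧
      x.1 = Real.cos (k * π / n) ∧ x.2 = Real.cos (l * π / (n + 1)) := by
  obtain ⟨k, j, hk, hj1, hj2, hxe⟩ := hx
  by_cases hke : Even k
  · refine ⟨k, 2 * j - 1, hk, by omega, ?_, ?_, ?_⟩
    · have := Nat.even_iff.mp hke; omega
    · rw [hxe]; rfl
    · rw [hxe]
      show padEta n k j = _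
      rw [padEta, if_pos hke]
      congr 1
      have hc : ((2 * j - 1 : ℕ) : ℝ) = 2 * (j : ℝ) - 1 := by
        have h1 : 1 ≤ 2 * j := by omega
        push_cast [h1]
        ring
      rw [hc]
  · refine ⟨k, 2 * j - 2, hk, by omega, ?_, ?_, ?_⟩
    · have := Nat.odd_iff.mp (Nat.not_even_iff_odd.mp hke); omega
    · rw [hxe]; rfl
    · rw [hxe]
      show padEta n k j = _
      rw [padEta, if_neg hke]
      congr 1
      have hc : ((2 * j - 2 : ℕ) : ℝ) = 2 * (j : ℝ) - 2 := by
        have h1 : 2 ≤ 2 * j := by omega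
        push_cast [h1]
        ring
      rw [hc]

lemma chTtil_mul (a : ℕ) (θ φ : ℝ) :
    chTtil a (Real.cos θ) * chTtil a (Real.cos φ)
      = eps a * (Real.cos (a * θ) * Real.cos (a * φ)) := by
  unfold chTtil eps chT
  split
  · rename_i h
    subst h
    simp
  · rw [Polynomial.Chebyshev.T_real_cos, Polynomial.Chebyshev.T_real_cos]
    push_cast
    have h2 : Real.sqrt 2 * Real.sqrt 2 = 2 := Real.mul_self_sqrt (by norm_num)
    linear_combination (Real.cos ((a : ℝ) * θ) * Real.cos ((a : ℝ) * φ)) * h2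

lemma coscos (A B : ℝ) :
    Real.cos A * Real.cos B = (Real.cos (A - B) + Real.cos (A + B)) / 2 := by
  rw [Real.cos_sub, Real.cos_add]; ring

lemma cos_nat_pi (k : ℕ) : Real.cos ((k : ℝ) * π) = if Even k then (1 : ℝ) else -1 := by
  have h : ((k : ℝ)) = (((k : ℤ) : ℝ)) := by push_cast; ring
  rw [h]
  have h2 := Real.cos_int_mul_pi_sub 0 (k : ℤ)
  rw [sub_zero, Real.cos_zero, mul_one] at h2
  rw [h2]
  rcases Nat.even_or_odd k with hk | hk
  · rw [if_pos hk, Even.neg_one_zpow (by exact_mod_cast hk.natCast)]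
  · rw [if_neg (Nat.not_even_iff_odd.mpr hk), Odd.neg_one_zpow (by exact_mod_cast hk.natCast)]

theorem kerKstar_vanishes (n : ℕ) (hn : 1 ≤ n) (x y : ℝ × ℝ)
    (hx : x ∈ Pad n) (hy : y ∈ Pad n) (hxy : x ≠ y) :
    kerKstar n x y = 0 := by
  obtain ⟨k, l, hk, hl, hklp, hx1, hx2⟩ := pad_repr hn hx
  obtain ⟨k', l', hk', hl', hklp', hy1, hy2⟩ := pad_repr hn hy
  have hn0 : (n : ℝ) ≠ 0 := Nat.cast_ne_zero.mpr (by omega)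
  have hne : ¬(k = k' ∧ l = l') := by
    rintro ⟨h1, h2⟩
    apply hxy
    apply Prod.ext
    · rw [hx1, hy1, h1]
    · rw [hx2, hy2, h2]
  set p1 : ℤ := (k : ℤ) - k' with hp1
  set p2 : ℤ := (k : ℤ) + k' with hp2
  set q1 : ℤ := (l : ℤ) - l' with hq1
  set q2 : ℤ := (l : ℤ) + l' with hq2
  set e : ℝ := if Even ((k : ℤ) + k') then 1 else -1 with he
  set t : ℤ → ℤ → ℕ → ℕ → ℝ := fun p q a b =>
    eps a * eps b * Real.cos (a * p * π / n) * Real.cos (b * q * π / (n + 1)) with ht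
  have hker : kerK n x y = ∑ a ∈ Finset.range (n + 1), ∑ b ∈ Finset.range (n + 1 - a),
      (1 / 4) * (t p1 q1 a b + t p1 q2 a b + t p2 q1 a b + t p2 q2 a b) := by
    unfold kerK
    have hsum1 : ∀ m ∈ Finset.range (n + 1),
        ∑ c ∈ Finset.range (m + 1), chP m c x * chP m c y
          = ∑ c ∈ Finset.range (m + 1),
              (fun a b => (chTtil a x.1 * chTtil a y.1) * (chTtil b x.2 * chTtil b y.2))
                (m - c) c := by
      intro m _
      apply Finset.sum_congr rfl
      intro c _
      show chP m c x * chP m c y = _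
      unfold chP
      ring
    rw [Finset.sum_congr rfl hsum1,
      tri_reindex n (fun a b => chTtil a x.1 * chTtil a y.1 * (chTtil b x.2 * chTtil b y.2))]
    apply Finset.sum_congr rfl
    intro a _
    apply Finset.sum_congr rfl
    intro b _
    show (chTtil a x.1 * chTtil a y.1) * (chTtil b x.2 * chTtil b y.2) = _
    rw [hx1, hy1, hx2, hy2, chTtil_mul, chTtil_mul]
    rw [coscos ((a : ℝ) * ((k : ℝ) * π / n)) ((a : ℝ) * ((k' : ℝ) * π / n)),
      coscos ((b : ℝ) * ((l : ℝ) * π / (n + 1))) ((b : ℝ) * ((l' : ℝ) * π / (n + 1)))]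
    have e1 : (a : ℝ) * ((k : ℝ) * π / n) - (a : ℝ) * ((k' : ℝ) * π / n)
        = (a : ℝ) * (p1 : ℝ) * π / n := by rw [hp1]; push_cast; ring
    have e2 : (a : ℝ) * ((k : ℝ) * π / n) + (a : ℝ) * ((k' : ℝ) * π / n)
        = (a : ℝ) * (p2 : ℝ) * π / n := by rw [hp2]; push_cast; ring
    have e3 : (b : ℝ) * ((l : ℝ) * π / (n + 1)) - (b : ℝ) * ((l' : ℝ) * π / (n + 1))
        = (b : ℝ) * (q1 : ℝ) * π / (n + 1) := by rw [hq1]; push_cast; ring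
    have e4 : (b : ℝ) * ((l : ℝ) * π / (n + 1)) + (b : ℝ) * ((l' : ℝ) * π / (n + 1))
        = (b : ℝ) * (q2 : ℝ) * π / (n + 1) := by rw [hq2]; push_cast; ring
    rw [e1, e2, e3, e4, ht]
    ring
  have hsplit : ∑ a ∈ Finset.range (n + 1), ∑ b ∈ Finset.range (n + 1 - a),
      (1 / 4 : ℝ) * (t p1 q1 a b + t p1 q2 a b + t p2 q1 a b + t p2 q2 a b)
      = (1 / 4) * ((∑ a ∈ Finset.range (n + 1), ∑ b ∈ Finset.range (n + 1 - a), t p1 q1 a b)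
        + (∑ a ∈ Finset.range (n + 1), ∑ b ∈ Finset.range (n + 1 - a), t p1 q2 a b)
        + (∑ a ∈ Finset.range (n + 1), ∑ b ∈ Finset.range (n + 1 - a), t p2 q1 a b)
        + (∑ a ∈ Finset.range (n + 1), ∑ b ∈ Finset.range (n + 1 - a), t p2 q2 a b)) := by
    simp only [mul_add, Finset.mul_sum, Finset.sum_add_distrib]
  have hSgen : ∀ (pp qq : ℤ), Even (pp + qq) →
      ¬((2 * (n : ℤ)) ∣ pp ∧ (2 * ((n : ℤ) + 1)) ∣ qq) →
      ∑ a ∈ Finset.range (n + 1), ∑ b ∈ Finset.range (n + 1 - a), t pp qq a b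
        = if Even pp then (1 : ℝ) else -1 := by
    intro pp qq hpar hnd
    exact S_eval n hn pp qq hpar hnd
  have hS11 := hSgen p1 q1
    (by rw [hp1, hq1, Int.even_iff]; omega)
    (fun ⟨h1, h2⟩ => hne ⟨keq_of_dvd_sub hn hk hk' h1,
      keq_of_dvd_sub (n := n + 1) (by omega) hl hl' (by push_cast; exact h2)⟩)
  have hS12 := hSgen p1 q2
    (by rw [hp1, hq2, Int.even_iff]; omega)
    (fun ⟨h1, h2⟩ => hne ⟨keq_of_dvd_sub hn hk hk' h1,
      keq_of_dvd_add (n := n + 1) (by omega) hl hl' (by push_cast; exact h2)⟩)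
  have hS21 := hSgen p2 q1
    (by rw [hp2, hq1, Int.even_iff]; omega)
    (fun ⟨h1, h2⟩ => hne ⟨keq_of_dvd_add hn hk hk' h1,
      keq_of_dvd_sub (n := n + 1) (by omega) hl hl' (by push_cast; exact h2)⟩)
  have hS22 := hSgen p2 q2
    (by rw [hp2, hq2, Int.even_iff]; omega)
    (fun ⟨h1, h2⟩ => hne ⟨keq_of_dvd_add hn hk hk' h1,
      keq_of_dvd_add (n := n + 1) (by omega) hl hl' (by push_cast; exact h2)⟩)
  have hiff1 : Even p1 ↔ Even ((k : ℤ) + k') := by rw [hp1, Int.even_sub, Int.even_add]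
  have hiff2 : Even p2 ↔ Even ((k : ℤ) + k') := by rw [hp2]
  have hE1 : (if Even p1 then (1 : ℝ) else -1) = e := by
    rw [he]; exact if_congr hiff1 rfl rfl
  have hE2 : (if Even p2 then (1 : ℝ) else -1) = e := by
    rw [he]
    try exact if_congr hiff2 rfl rfl
  have hchT : chT n x.1 * chT n y.1 = e := by
    rw [hx1, hy1]
    unfold chT
    rw [Polynomial.Chebyshev.T_real_cos, Polynomial.Chebyshev.T_real_cos]
    have a1 : ((n : ℤ) : ℝ) * ((k : ℝ) * π / n) = (k : ℝ) * π := by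
      push_cast; field_simp
    have a2 : ((n : ℤ) : ℝ) * ((k' : ℝ) * π / n) = (k' : ℝ) * π := by
      push_cast; field_simp
    rw [a1, a2, cos_nat_pi, cos_nat_pi, he]
    have hiff : Even ((k : ℤ) + k') ↔ (Even k ↔ Even k') := by
      rw [Int.even_add, Int.even_coe_nat, Int.even_coe_nat]
    by_cases h1 : Even k <;> by_cases h2 : Even k'
    · rw [if_pos h1, if_pos h2, if_pos (hiff.mpr (by tauto))]; ring
    · rw [if_pos h1, if_neg h2, if_neg (fun h => h2 ((hiff.mp h).mp h1))]; ring
    · rw [if_neg h1, if_pos h2, if_neg (fun h => h1 ((hiff.mp h).mpr h2))]; ring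
    · rw [if_neg h1, if_neg h2, if_pos (hiff.mpr (by tauto))]; ring
  rw [kerKstar, hker, hsplit, hS11, hS12, hS21, hS22, hE1, hE2, hchT]
  ring
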